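/- If D ⊆ ω^ω × ω^ω is a Gδ set (in particular, any closed set) and A × B ⊆ D for some uncountable sets A, B ⊆ ω^ω, then D contains a perfect rectangle P₁ × P₂ with P₁, P₂ ⊆ ω^ω nonempty perfect sets. -/

import Mathlib

open Cardinal

namespace Sh522

open Set PiNat

/-! ### Auxiliary topological lemmas about cylinders -/

lemma cyl_subset_of_isOpen {E : ℕ → Type*} [∀ n, TopologicalSpace (E n)]
    [∀ n, DiscreteTopology (E n)] {U : Set (∀ n, E n)} (hU : IsOpen U) {x : ∀ n, E n}
    (hx : x ∈ U) : ∃ n, cylinder x n ⊆ U := by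
  obtain ⟨v, ⟨z, n, rfl⟩, hxv, hvU⟩ :=
    (isTopologicalBasis_cylinders E).exists_subset_of_mem_open hx hU
  exact ⟨n, by rwa [mem_cylinder_iff_eq.1 hxv]⟩

lemma cyl_prod_subset {W : Set ((ℕ → ℕ) × (ℕ → ℕ))} (hW : IsOpen W) {x y : ℕ → ℕ}
    (hxy : (x, y) ∈ W) : ∃ k, cylinder x k ×ˢ cylinder y k ⊆ W := by
  obtain ⟨u, v, hu, hv, hxu, hyv, huv⟩ := isOpen_prod_iff.1 hW x y hxy
  obtain ⟨n, hn⟩ := cyl_subset_of_isOpen hu hxu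
  obtain ⟨m, hm⟩ := cyl_subset_of_isOpen hv hyv
  exact ⟨max n m, fun p hp => huv ⟨hn (cylinder_anti _ (le_max_left n m) hp.1),
    hm (cylinder_anti _ (le_max_right n m) hp.2)⟩⟩

lemma disjoint_cyl_of_ne {α : Type} {x y : ℕ → α} (h : x ≠ y) {k : ℕ}
    (hk : firstDiff x y < k) : Disjoint (cylinder x k) (cylinder y k) := by
  rw [Set.disjoint_left]
  intro z hzx hzy
  exact apply_firstDiff_ne h
    (((mem_cylinder_iff.1 hzx) _ hk).symm.trans ((mem_cylinder_iff.1 hzy) _ hk))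

/-! ### Condensation points -/

lemma condensation {S : Set (ℕ → ℕ)} (hS : ¬ S.Countable) :
    ∃ S₁ : Set (ℕ → ℕ), S₁ ⊆ S ∧ S₁.Nonempty ∧
      ∀ x ∈ S₁, ∀ n : ℕ, ∃ y ∈ S₁, y ∈ cylinder x n ∧ y ≠ x := by
  classical
  set S₁ : Set (ℕ → ℕ) := {x ∈ S | ∀ n : ℕ, ¬ (S ∩ cylinder x n).Countable} with hS₁def
  have hsub : S₁ ⊆ S := fun x hx => hx.1
  set F : List ℕ → Set (ℕ → ℕ) := fun l =>
    if (S ∩ {y | res y l.length = l}).Countable then S ∩ {y | res y l.length = l} else ∅ with hF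
  have hFc : ∀ l, (F l).Countable := by
    intro l
    rw [hF]
    dsimp only
    split
    · assumption
    · exact countable_empty
  have hcov : S \ S₁ ⊆ ⋃ l : List ℕ, F l := by
    intro x hx
    have hxS : x ∈ S := hx.1
    have hex : ∃ n, (S ∩ cylinder x n).Countable := by
      by_contra hcon
      push_neg at hcon
      exact hx.2 ⟨hxS, hcon⟩
    obtain ⟨n, hn⟩ := hex
    have hcyl : cylinder x n = {y | res y (res x n).length = res x n} := by
      rw [res_length, cylinder_eq_res]
    refine Set.mem_iUnion.2 ⟨res x n, ?_⟩
    rw [hF]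
    dsimp only
    rw [← hcyl, if_pos hn]
    exact ⟨hxS, self_mem_cylinder x n⟩
  have hdc : (S \ S₁).Countable := (Set.countable_iUnion hFc).mono hcov
  have hS₁nc : ¬ S₁.Countable := by
    intro h
    refine hS ((h.union hdc).mono fun x hx => ?_)
    by_cases hx1 : x ∈ S₁
    · exact Or.inl hx1
    · exact Or.inr ⟨hx, hx1⟩
  refine ⟨S₁, hsub, Set.nonempty_iff_ne_empty.2 (fun h => hS₁nc (h ▸ Set.countable_empty)), ?_⟩
  intro x hx n
  have h1 : ¬ (S ∩ cylinder x n).Countable := hx.2 n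
  have h2 : ¬ ((S ∩ cylinder x n) \ ((S \ S₁) ∪ {x})).Countable := by
    intro h
    refine h1 ((h.union (hdc.union (Set.countable_singleton x))).mono fun z hz => ?_)
    by_cases hz1 : z ∈ (S \ S₁) ∪ {x}
    · exact Or.inr hz1
    · exact Or.inl ⟨hz, hz1⟩
  have h3 : ((S ∩ cylinder x n) \ ((S \ S₁) ∪ {x})).Nonempty := by
    rw [Set.nonempty_iff_ne_empty]
    intro h
    rw [h] at h2
    exact h2 Set.countable_empty
  obtain ⟨y, hy⟩ := h3
  have hyS₁ : y ∈ S₁ := by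
    by_contra hc
    exact hy.2 (Or.inl ⟨hy.1.1, hc⟩)
  exact ⟨y, hyS₁, hy.1.2, fun h => hy.2 (Or.inr (by simp [h]))⟩

/-! ### The fusion construction -/

/-- All data needed for the fusion construction. -/
structure Setup where
  U : ℕ → Set ((ℕ → ℕ) × (ℕ → ℕ))
  A₁ : Set (ℕ → ℕ)
  B₁ : Set (ℕ → ℕ)
  a₀ : ℕ → ℕ
  b₀ : ℕ → ℕ
  ha₀ : a₀ ∈ A₁
  hb₀ : b₀ ∈ B₁
  hU : ∀ n, IsOpen (U n)
  hA₁ : ∀ x ∈ A₁, ∀ n : ℕ, ∃ y ∈ A₁, y ∈ cylinder x n ∧ y ≠ x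
  hB₁ : ∀ x ∈ B₁, ∀ n : ℕ, ∃ y ∈ B₁, y ∈ cylinder x n ∧ y ≠ x
  hsub : ∀ n : ℕ, ∀ p ∈ A₁, ∀ q ∈ B₁, (p, q) ∈ U n

/-- The state of the construction: two labelled trees of points and a depth. -/
abbrev St := (List Bool → (ℕ → ℕ)) × (List Bool → (ℕ → ℕ)) × ℕ

/-- The invariant at level `n`. -/
def Inv (C : Setup) (n : ℕ) (st : St) : Prop :=
  (∀ s, st.1 s ∈ C.A₁) ∧ (∀ s, st.2.1 s ∈ C.B₁) ∧ n < st.2.2 ∧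
  (∀ s t : List Bool, s.length = n → t.length = n → s ≠ t →
      Disjoint (cylinder (st.1 s) st.2.2) (cylinder (st.1 t) st.2.2) ∧
      Disjoint (cylinder (st.2.1 s) st.2.2) (cylinder (st.2.1 t) st.2.2)) ∧
  (∀ s t : List Bool, s.length = n → t.length = n →
      cylinder (st.1 s) st.2.2 ×ˢ cylinder (st.2.1 t) st.2.2 ⊆ C.U n)

/-- Relation between consecutive states. -/
def StepRel (st st' : St) : Prop :=
  st.2.2 < st'.2.2 ∧
  ∀ (s : List Bool) (i : Bool),
    st'.1 (i :: s) ∈ cylinder (st.1 s) st.2.2 ∧ st'.2.1 (i :: s) ∈ cylinder (st.2.1 s) st.2.2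

lemma step_ex (C : Setup) (n : ℕ) (st : St) (h : Inv C n st) :
    ∃ st' : St, Inv C (n + 1) st' ∧ StepRel st st' := by
  obtain ⟨haA, hbB, hnm, hdisj, hprod⟩ := h
  set a := st.1 with ha
  set b := st.2.1 with hb
  set m := st.2.2 with hm0
  choose ea hea1 hea2 hea3 using fun s : List Bool => C.hA₁ (a s) (haA s) m
  choose eb heb1 heb2 heb3 using fun s : List Bool => C.hB₁ (b s) (hbB s) m
  set a' : List Bool → ℕ → ℕ := fun l => if l.headI then ea l.tail else a l.tail with ha'
  set b' : List Bool → ℕ → ℕ := fun l => if l.headI then eb l.tail else b l.tail with hb'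
  have ha'A : ∀ l, a' l ∈ C.A₁ := by
    intro l
    rw [ha']
    dsimp only
    split
    · exact hea1 _
    · exact haA _
  have hb'B : ∀ l, b' l ∈ C.B₁ := by
    intro l
    rw [hb']
    dsimp only
    split
    · exact heb1 _
    · exact hbB _
  have ha'cons : ∀ (i : Bool) (s : List Bool), a' (i :: s) = if i then ea s else a s := by
    intro i s; rfl
  have hb'cons : ∀ (i : Bool) (s : List Bool), b' (i :: s) = if i then eb s else b s := by
    intro i s; rfl
  have ha'f : ∀ s : List Bool, a' (false :: s) = a s := by
    intro s; rw [ha'cons]; simp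
  have ha't : ∀ s : List Bool, a' (true :: s) = ea s := by
    intro s; rw [ha'cons]; simp
  have ha'cyl : ∀ (s : List Bool) (i : Bool), a' (i :: s) ∈ cylinder (a s) m := by
    intro s i
    cases i
    · rw [ha'f]; exact self_mem_cylinder (a s) m
    · rw [ha't]; exact hea2 s
  have hb'f : ∀ s : List Bool, b' (false :: s) = b s := by
    intro s; rw [hb'cons]; simp
  have hb't : ∀ s : List Bool, b' (true :: s) = eb s := by
    intro s; rw [hb'cons]; simp
  have hb'cyl : ∀ (s : List Bool) (i : Bool), b' (i :: s) ∈ cylinder (b s) m := by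
    intro s i
    cases i
    · rw [hb'f]; exact self_mem_cylinder (b s) m
    · rw [hb't]; exact heb2 s
  -- distinctness of the new points
  have hnea : ∀ s t : List Bool, s.length = n + 1 → t.length = n + 1 → s ≠ t → a' s ≠ a' t := by
    rintro (_ | ⟨i, s⟩) t hs ht hst
    · simp at hs
    rcases t with _ | ⟨j, t⟩
    · simp at ht
    simp only [List.length_cons, Nat.add_right_cancel_iff] at hs ht
    by_cases hstl : s = t
    · subst hstl
      have hij : i ≠ j := fun hij => hst (by rw [hij])
      cases i <;> cases j
      · exact absurd rfl hij
      · rw [ha'f, ha't]; exact fun hh => hea3 s hh.symm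
      · rw [ha't, ha'f]; exact hea3 s
      · exact absurd rfl hij
    · intro heq
      have h1 := ha'cyl s i
      have h2 := ha'cyl t j
      rw [heq] at h1
      exact Set.disjoint_left.1 (hdisj s t hs ht hstl).1 h1 h2
  have hneb : ∀ s t : List Bool, s.length = n + 1 → t.length = n + 1 → s ≠ t → b' s ≠ b' t := by
    rintro (_ | ⟨i, s⟩) t hs ht hst
    · simp at hs
    rcases t with _ | ⟨j, t⟩
    · simp at ht
    simp only [List.length_cons, Nat.add_right_cancel_iff] at hs ht
    by_cases hstl : s = t
    · subst hstl
      have hij : i ≠ j := fun hij => hst (by rw [hij])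
      cases i <;> cases j
      · exact absurd rfl hij
      · rw [hb'f, hb't]; exact fun hh => heb3 s hh.symm
      · rw [hb't, hb'f]; exact heb3 s
      · exact absurd rfl hij
    · intro heq
      have h1 := hb'cyl s i
      have h2 := hb'cyl t j
      rw [heq] at h1
      exact Set.disjoint_left.1 (hdisj s t hs ht hstl).2 h1 h2
  -- choose a uniform depth
  have hfin : ({l : List Bool | l.length = n + 1} ×ˢ {l : List Bool | l.length = n + 1}).Finite :=
    Set.Finite.prod (List.finite_length_eq Bool (n + 1)) (List.finite_length_eq Bool (n + 1))
  choose k hk using fun p : List Bool × List Bool =>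
    cyl_prod_subset (C.hU (n + 1)) (C.hsub (n + 1) (a' p.1) (ha'A p.1) (b' p.2) (hb'B p.2))
  set g : List Bool × List Bool → ℕ := fun p =>
    max (k p) (max (firstDiff (a' p.1) (a' p.2)) (firstDiff (b' p.1) (b' p.2))) with hg
  obtain ⟨M₀, hM₀⟩ := (hfin.image g).bddAbove
  set M := max (M₀ + 1) (max (m + 1) (n + 2)) with hM
  have hup : ∀ s t : List Bool, s.length = n + 1 → t.length = n + 1 → g (s, t) < M := by
    intro s t hs ht
    have hmem : (s, t) ∈
        ({l : List Bool | l.length = n + 1} ×ˢ {l : List Bool | l.length = n + 1}) := ⟨hs, ht⟩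
    calc g (s, t) ≤ M₀ := hM₀ (Set.mem_image_of_mem g hmem)
    _ < M₀ + 1 := Nat.lt_succ_self _
    _ ≤ M := le_max_left _ _
  have hmM : m < M := lt_of_lt_of_le (Nat.lt_succ_self m)
    (le_trans (le_max_left _ _) (le_max_right _ _))
  refine ⟨(a', b', M), ⟨ha'A, hb'B, ?_, ?_, ?_⟩, hmM, ?_⟩
  · calc n + 1 < n + 2 := Nat.lt_succ_self _
    _ ≤ M := le_trans (le_max_right _ _) (le_max_right _ _)
  · intro s t hs ht hst
    constructor
    · refine disjoint_cyl_of_ne (hnea s t hs ht hst) ?_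
      calc firstDiff (a' s) (a' t) ≤ g (s, t) := le_trans (le_max_left _ _) (le_max_right _ _)
      _ < M := hup s t hs ht
    · refine disjoint_cyl_of_ne (hneb s t hs ht hst) ?_
      calc firstDiff (b' s) (b' t) ≤ g (s, t) := le_trans (le_max_right _ _) (le_max_right _ _)
      _ < M := hup s t hs ht
  · intro s t hs ht
    have hkM : k (s, t) ≤ M := le_trans (le_max_left _ _) (hup s t hs ht).le
    intro z hz
    exact hk (s, t) ⟨cylinder_anti _ hkM hz.1, cylinder_anti _ hkM hz.2⟩
  · exact fun s i => ⟨ha'cyl s i, hb'cyl s i⟩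

lemma base_ex (C : Setup) : ∃ st : St, Inv C 0 st := by
  obtain ⟨k, hk⟩ := cyl_prod_subset (C.hU 0) (C.hsub 0 C.a₀ C.ha₀ C.b₀ C.hb₀)
  refine ⟨(fun _ => C.a₀, fun _ => C.b₀, k + 1), fun _ => C.ha₀, fun _ => C.hb₀,
    Nat.succ_pos k, ?_, ?_⟩
  · intro s t hs ht hst
    exact absurd (by rw [List.length_eq_zero_iff.1 hs, List.length_eq_zero_iff.1 ht]) hst
  · intro s t _ _ z hz
    exact hk ⟨cylinder_anti _ (Nat.le_succ k) hz.1, cylinder_anti _ (Nat.le_succ k) hz.2⟩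

noncomputable def seq (C : Setup) : ∀ n : ℕ, {st : St // Inv C n st} := fun n =>
  Nat.rec ⟨(base_ex C).choose, (base_ex C).choose_spec⟩
    (fun n ih => ⟨(step_ex C n ih.1 ih.2).choose, (step_ex C n ih.1 ih.2).choose_spec.1⟩) n

lemma seq_step (C : Setup) (n : ℕ) : StepRel (seq C n).1 (seq C (n + 1)).1 :=
  (step_ex C n (seq C n).1 (seq C n).2).choose_spec.2

/-- The depth at level `n`. -/
noncomputable def md (C : Setup) (n : ℕ) : ℕ := (seq C n).1.2.2

/-- The `A`-side point attached to the length-`n` restriction of a branch `f`. -/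
noncomputable def pa (C : Setup) (f : ℕ → Bool) (n : ℕ) : ℕ → ℕ := (seq C n).1.1 (res f n)

/-- The `B`-side point attached to the length-`n` restriction of a branch `f`. -/
noncomputable def pb (C : Setup) (f : ℕ → Bool) (n : ℕ) : ℕ → ℕ := (seq C n).1.2.1 (res f n)

lemma md_lt (C : Setup) (n : ℕ) : n < md C n := (seq C n).2.2.2.1

lemma md_mono (C : Setup) : Monotone (md C) :=
  (strictMono_nat_of_lt_succ fun n => (seq_step C n).1).monotone

lemma pa_nest (C : Setup) (f : ℕ → Bool) (n : ℕ) :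
    pa C f (n + 1) ∈ cylinder (pa C f n) (md C n) := by
  have := ((seq_step C n).2 (res f n) (f n)).1
  rwa [pa, pa, res_succ]

lemma pb_nest (C : Setup) (f : ℕ → Bool) (n : ℕ) :
    pb C f (n + 1) ∈ cylinder (pb C f n) (md C n) := by
  have := ((seq_step C n).2 (res f n) (f n)).2
  rwa [pb, pb, res_succ]

/-! ### Generic limit lemmas -/

section Lim

variable {p : (ℕ → Bool) → ℕ → ℕ → ℕ} {d : ℕ → ℕ}

lemma chain (hnest : ∀ f n, p f (n + 1) ∈ cylinder (p f n) (d n)) (hmono : Monotone d)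
    (f : ℕ → Bool) (n : ℕ) : ∀ k, n ≤ k → p f k ∈ cylinder (p f n) (d n) := by
  intro k
  induction k with
  | zero => intro hk; rw [Nat.le_zero.1 hk]; exact self_mem_cylinder _ _
  | succ k ih =>
    intro hk
    rcases Nat.lt_or_ge n (k + 1) with hlt | hge
    · have hnk : n ≤ k := Nat.lt_succ_iff.1 hlt
      have h1 : p f (k + 1) ∈ cylinder (p f k) (d n) :=
        cylinder_anti _ (hmono hnk) (hnest f k)
      rw [mem_cylinder_iff_eq.1 (ih hnk)] at h1
      exact h1
    · rw [Nat.le_antisymm hk hge]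
      exact self_mem_cylinder _ _

lemma lim_mem (hnest : ∀ f n, p f (n + 1) ∈ cylinder (p f n) (d n)) (hmono : Monotone d)
    (hlt : ∀ n, n < d n) (f : ℕ → Bool) (n : ℕ) :
    (fun i => p f (i + 1) i) ∈ cylinder (p f n) (d n) := by
  rw [mem_cylinder_iff]
  intro i hi
  rcases le_or_gt n (i + 1) with hle | hgt
  · exact mem_cylinder_iff.1 (chain hnest hmono f n (i + 1) hle) i hi
  · have h1 := chain hnest hmono f (i + 1) n hgt.le
    have h2 : i < d (i + 1) := lt_trans (Nat.lt_succ_self i) (hlt (i + 1))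
    exact (mem_cylinder_iff.1 h1 i h2).symm

lemma lim_agree (hres : ∀ f g n, res f n = res g n → p f n = p g n)
    (f g : ℕ → Bool) (N : ℕ) (h : res f N = res g N) :
    ∀ i < N, p f (i + 1) i = p g (i + 1) i := by
  intro i hi
  have h1 : res f (i + 1) = res g (i + 1) :=
    res_eq_res.2 fun m hm => res_eq_res.1 h (lt_of_lt_of_le hm (Nat.succ_le_of_lt hi))
  rw [hres f g (i + 1) h1]

end Lim

/-! ### The limit maps -/

/-- The limit map on the `A`-side. -/
noncomputable def Φa (C : Setup) (f : ℕ → Bool) : ℕ → ℕ := fun i => pa C f (i + 1) i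

/-- The limit map on the `B`-side. -/
noncomputable def Φb (C : Setup) (f : ℕ → Bool) : ℕ → ℕ := fun i => pb C f (i + 1) i

lemma pa_res (C : Setup) (f g : ℕ → Bool) (n : ℕ) (h : res f n = res g n) :
    pa C f n = pa C g n := by rw [pa, pa, h]

lemma pb_res (C : Setup) (f g : ℕ → Bool) (n : ℕ) (h : res f n = res g n) :
    pb C f n = pb C g n := by rw [pb, pb, h]

lemma Φa_mem (C : Setup) (f : ℕ → Bool) (n : ℕ) : Φa C f ∈ cylinder (pa C f n) (md C n) :=
  lim_mem (pa_nest C) (md_mono C) (md_lt C) f n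

lemma Φb_mem (C : Setup) (f : ℕ → Bool) (n : ℕ) : Φb C f ∈ cylinder (pb C f n) (md C n) :=
  lim_mem (pb_nest C) (md_mono C) (md_lt C) f n

lemma Φa_agree (C : Setup) (f g : ℕ → Bool) (N : ℕ) (h : res f N = res g N) :
    ∀ i < N, Φa C f i = Φa C g i :=
  lim_agree (pa_res C) f g N h

lemma Φb_agree (C : Setup) (f g : ℕ → Bool) (N : ℕ) (h : res f N = res g N) :
    ∀ i < N, Φb C f i = Φb C g i :=
  lim_agree (pb_res C) f g N h

lemma Φa_inj (C : Setup) : Function.Injective (Φa C) := by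
  intro f g h
  by_contra hfg
  set n := firstDiff f g with hn
  have hres : res f n = res g n := res_eq_res.2 fun m hm => apply_eq_of_lt_firstDiff hm
  have hne : res f (n + 1) ≠ res g (n + 1) := by
    rw [res_succ, res_succ]
    intro hc
    exact apply_firstDiff_ne hfg (List.head_eq_of_cons_eq hc)
  have hd := ((seq C (n + 1)).2.2.2.2.1 (res f (n + 1)) (res g (n + 1))
    (res_length f (n + 1)) (res_length g (n + 1)) hne).1
  have h1 := Φa_mem C f (n + 1)
  have h2 := Φa_mem C g (n + 1)
  rw [h] at h1
  exact Set.disjoint_left.1 hd h1 h2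

lemma Φb_inj (C : Setup) : Function.Injective (Φb C) := by
  intro f g h
  by_contra hfg
  set n := firstDiff f g with hn
  have hres : res f n = res g n := res_eq_res.2 fun m hm => apply_eq_of_lt_firstDiff hm
  have hne : res f (n + 1) ≠ res g (n + 1) := by
    rw [res_succ, res_succ]
    intro hc
    exact apply_firstDiff_ne hfg (List.head_eq_of_cons_eq hc)
  have hd := ((seq C (n + 1)).2.2.2.2.1 (res f (n + 1)) (res g (n + 1))
    (res_length f (n + 1)) (res_length g (n + 1)) hne).2
  have h1 := Φb_mem C f (n + 1)
  have h2 := Φb_mem C g (n + 1)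
  rw [h] at h1
  exact Set.disjoint_left.1 hd h1 h2

lemma Φ_cont {Φ : (ℕ → Bool) → ℕ → ℕ}
    (hagree : ∀ f g N, res f N = res g N → ∀ i < N, Φ f i = Φ g i) : Continuous Φ := by
  rw [continuous_iff_continuousAt]
  intro f
  intro V hV
  rw [Filter.mem_map]
  obtain ⟨W, hWV, hWo, hfW⟩ := mem_nhds_iff.1 hV
  obtain ⟨n, hn⟩ := cyl_subset_of_isOpen hWo hfW
  refine Filter.mem_of_superset
    (((isOpen_cylinder (fun _ : ℕ => Bool) f n)).mem_nhds (self_mem_cylinder f n)) ?_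
  intro g hg
  apply hWV
  apply hn
  rw [mem_cylinder_iff]
  intro i hi
  exact (hagree f g n (res_eq_res.2 fun m hm => (mem_cylinder_iff.1 hg m hm).symm) i hi).symm

lemma range_perfect {Φ : (ℕ → Bool) → ℕ → ℕ} (hc : Continuous Φ)
    (hinj : Function.Injective Φ)
    (hagree : ∀ f g N, res f N = res g N → ∀ i < N, Φ f i = Φ g i) :
    Perfect (Set.range Φ) := by
  constructor
  · exact (isCompact_range hc).isClosed
  · rw [preperfect_iff_nhds]
    rintro x ⟨f, rfl⟩ V hV
    obtain ⟨W, hWV, hWo, hfW⟩ := mem_nhds_iff.1 hV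
    obtain ⟨n, hn⟩ := cyl_subset_of_isOpen hWo hfW
    set g : ℕ → Bool := fun k => if k = n then !f k else f k with hgdef
    have hgn : g n = !f n := by rw [hgdef]; simp
    have hgf : g ≠ f := by
      intro hc2
      have := congrFun hc2 n
      rw [hgn] at this
      exact Bool.not_ne_self (f n) this
    have hresg : res g n = res f n :=
      res_eq_res.2 fun m hm => by rw [hgdef]; simp [Nat.ne_of_lt hm]
    refine ⟨Φ g, ⟨hWV (hn ?_), Set.mem_range_self g⟩, fun hgf2 => hgf (hinj hgf2)⟩
    rw [mem_cylinder_iff]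
    intro i hi
    exact hagree g f n hresg i hi

/-! ### Main theorem -/

/-- a Gδ subset of Baire space squared containing a rectangle with
both sides uncountable contains a perfect rectangle. -/
theorem stmt_18 (D : Set ((ℕ → ℕ) × (ℕ → ℕ))) (hD : IsGδ D)
    (A B : Set (ℕ → ℕ)) (hA : ℵ₀ < Cardinal.mk A) (hB : ℵ₀ < Cardinal.mk B)
    (hAB : A ×ˢ B ⊆ D) :
    ∃ P₁ P₂ : Set (ℕ → ℕ),
      Perfect P₁ ∧ P₁.Nonempty ∧ Perfect P₂ ∧ P₂.Nonempty ∧ P₁ ×ˢ P₂ ⊆ D := by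
  obtain ⟨U, hU, hDU⟩ := isGδ_iff_eq_iInter_nat.1 hD
  have hAnc : ¬ A.Countable := fun h =>
    absurd hA (not_lt.2 (Cardinal.le_aleph0_iff_set_countable.2 h))
  have hBnc : ¬ B.Countable := fun h =>
    absurd hB (not_lt.2 (Cardinal.le_aleph0_iff_set_countable.2 h))
  obtain ⟨A₁, hA₁sub, ⟨a₀, ha₀⟩, hA₁⟩ := condensation hAnc
  obtain ⟨B₁, hB₁sub, ⟨b₀, hb₀⟩, hB₁⟩ := condensation hBnc
  have hsub : ∀ n : ℕ, ∀ p ∈ A₁, ∀ q ∈ B₁, (p, q) ∈ U n := by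
    intro n p hp q hq
    have : (p, q) ∈ D := hAB ⟨hA₁sub hp, hB₁sub hq⟩
    rw [hDU] at this
    exact Set.mem_iInter.1 this n
  set C : Setup := ⟨U, A₁, B₁, a₀, b₀, ha₀, hb₀, hU, hA₁, hB₁, hsub⟩ with hC
  refine ⟨Set.range (Φa C), Set.range (Φb C),
    range_perfect (Φ_cont (Φa_agree C)) (Φa_inj C) (Φa_agree C),
    ⟨Φa C (fun _ => false), Set.mem_range_self _⟩,
    range_perfect (Φ_cont (Φb_agree C)) (Φb_inj C) (Φb_agree C),
    ⟨Φb C (fun _ => false), Set.mem_range_self _⟩, ?_⟩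
  rintro ⟨x, y⟩ ⟨⟨f, rfl⟩, ⟨g, rfl⟩⟩
  rw [hDU]
  rw [Set.mem_iInter]
  intro n
  have hp := (seq C n).2.2.2.2.2 (res f n) (res g n) (res_length f n) (res_length g n)
  exact hp ⟨Φa_mem C f n, Φb_mem C g n⟩

end Sh522
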